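/- For every integer k ≥ 3, the complete graph K_k is not σ-stable. -/

import Mathlib

open SimpleGraph

/-- `List.Sorted` as in the older Mathlib (removed since): `Sorted R l := Pairwise R l`. -/
def List.Sorted {α : Type*} (R : α → α → Prop) : List α → Prop :=
  List.Pairwise R

/-- The degree of a vertex, defined without decidability assumptions. -/
noncomputable def gdeg {V : Type*} [Fintype V] (G : SimpleGraph V) (v : V) : ℕ :=
  {w | G.Adj v w}.ncard

/-- The multiset of vertex degrees of a finite simple graph. -/
noncomputable def degMultiset {V : Type*} [Fintype V] (G : SimpleGraph V) : Multiset ℕ :=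
  Finset.univ.val.map (gdeg G)

/-- A finite sequence of naturals is *graphic* if it is the degree sequence of
a finite simple graph (a *realization*). -/
def IsGraphic (π : List ℕ) : Prop :=
  ∃ G : SimpleGraph (Fin π.length), degMultiset G = (π : Multiset ℕ)

/-- `H` is contained in `G` as a (not necessarily induced) subgraph. -/
def ContainsSub {V : Type*} {W : Type*} (H : SimpleGraph V) (G : SimpleGraph W) : Prop :=
  ∃ f : V → W, Function.Injective f ∧ ∀ ⦃a b⦄, H.Adj a b → G.Adj (f a) (f b)

/-- `π` is *potentially `H`-graphic*: some realization of `π` contains `H` as a subgraph. -/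
def PotentiallyGraphic {V : Type*} (H : SimpleGraph V) (π : List ℕ) : Prop :=
  ∃ G : SimpleGraph (Fin π.length), degMultiset G = (π : Multiset ℕ) ∧ ContainsSub H G

/-- The potential number `σ(H,n)`: the minimum even integer such that every
(nonincreasing) graphic sequence of length `n` with sum at least that integer is
potentially `H`-graphic. -/
noncomputable def potentialNumber {V : Type*} (H : SimpleGraph V) (n : ℕ) : ℕ :=
  sInf {s : ℕ | Even s ∧ ∀ π : List ℕ, π.length = n → π.Sorted (· ≥ ·) →
      IsGraphic π → s ≤ π.sum → PotentiallyGraphic H π}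

/-- The maximum degree `Δ(G)` of a finite graph. -/
noncomputable def maxDeg {V : Type*} [Fintype V] (G : SimpleGraph V) : ℕ :=
  Finset.univ.sup (gdeg G)

/-- The independence number `α(G)`. -/
noncomputable def indepNum {V : Type*} [Fintype V] (G : SimpleGraph V) : ℕ :=
  sSup {k | ∃ s : Finset V, s.card = k ∧ (s : Set V).Pairwise fun a b => ¬ G.Adj a b}

/-- `∇_i(H)`: the minimum of `Δ(F)` over induced subgraphs `F` of `H` of order `i`. -/
noncomputable def nabla {V : Type*} [Fintype V] (H : SimpleGraph V) (i : ℕ) : ℕ :=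
  sInf {d | ∃ s : Finset V, s.card = i ∧ maxDeg (SimpleGraph.induce (s : Set V) H) = d}

/-- The sequence `π̃_i(H,n) = ((n-1)^{k-i}, (k-i+∇_i(H)-1)^{n-k+i})`, with the last
term reduced by one if the sum would otherwise be odd. -/
noncomputable def tildePi {V : Type*} [Fintype V] (H : SimpleGraph V) (i n : ℕ) : List ℕ :=
  let k := Fintype.card V
  let d := k - i + nabla H i - 1
  let base := List.replicate (k - i) (n - 1) ++ List.replicate (n - k + i) d
  if Even base.sum then base else base.dropLast ++ [d - 1]

/-- `σ̃_i(H) = 2(k-i) + ∇_i(H) - 1`. -/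
noncomputable def sigmaTildeI {V : Type*} [Fintype V] (H : SimpleGraph V) (i : ℕ) : ℕ :=
  2 * (Fintype.card V - i) + nabla H i - 1

/-- `σ̃(H) = max_{α(H)+1 ≤ i ≤ k} σ̃_i(H)`. -/
noncomputable def sigmaTilde {V : Type*} [Fintype V] (H : SimpleGraph V) : ℕ :=
  (Finset.Icc (_root_.indepNum H + 1) (Fintype.card V)).sup (sigmaTildeI H)

/-- The family `P(H,n)` of extremal nonrealizing sequences. -/
noncomputable def potSet {V : Type*} [Fintype V] (H : SimpleGraph V) (n : ℕ) : Set (List ℕ) :=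
  {π | ∃ i ∈ Finset.Icc (_root_.indepNum H + 1) (Fintype.card V),
      sigmaTildeI H i = sigmaTilde H ∧ π = tildePi H i n}

/-- `i*(H)`: the least index `i ∈ {α(H)+1, …, k}` with `σ̃_i(H) = σ̃(H)`. -/
noncomputable def iStar {V : Type*} [Fintype V] (H : SimpleGraph V) : ℕ :=
  sInf {i | i ∈ Finset.Icc (_root_.indepNum H + 1) (Fintype.card V) ∧ sigmaTildeI H i = sigmaTilde H}

/-- `‖π₁ - π₂‖ = Σ_j |x_j - y_j|`, padding the shorter sequence with zeros. -/
def seqDist (π₁ π₂ : List ℕ) : ℕ :=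
  ((List.range (max π₁.length π₂.length)).map fun j =>
    Nat.dist (π₁.getD j 0) (π₂.getD j 0)).sum

/-- `H` is stable with respect to the potential number (σ-stable). -/
def SigmaStable {V : Type*} [Fintype V] (H : SimpleGraph V) : Prop :=
  ∀ ε : ℝ, 0 < ε → ∃ δ : ℝ, 0 < δ ∧ ∃ n₀ : ℕ, ∀ n : ℕ, n₀ ≤ n →
    ∀ π : List ℕ, π.length = n → π.Sorted (· ≥ ·) → IsGraphic π →
      ¬ PotentiallyGraphic H π →
      (potentialNumber H n : ℝ) - δ * n ≤ (π.sum : ℝ) →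
      ∃ π' ∈ potSet H n, (seqDist π π' : ℝ) < ε * n

/-- The nonincreasing degree sequence of a finite graph. -/
noncomputable def degList {V : Type*} [Fintype V] (G : SimpleGraph V) : List ℕ :=
  ((degMultiset G).sort (· ≤ ·)).reverse

/-- `π` is degree-sufficient for `H`: termwise, `π` dominates the nonincreasing
degree sequence of `H`. -/
def DegreeSufficient {V : Type*} [Fintype V] (H : SimpleGraph V) (π : List ℕ) : Prop :=
  Fintype.card V ≤ π.length ∧ ∀ i < Fintype.card V, (degList H).getD i 0 ≤ π.getD i 0

/-- `H` is weakly σ-stable. -/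
def WeaklySigmaStable {V : Type*} [Fintype V] (H : SimpleGraph V) : Prop :=
  ∀ ε : ℝ, 0 < ε → ∃ δ : ℝ, 0 < δ ∧ ∃ n₀ : ℕ, ∀ n : ℕ, n₀ ≤ n →
    ∀ π : List ℕ, π.length = n → π.Sorted (· ≥ ·) → IsGraphic π →
      DegreeSufficient H π →
      ¬ PotentiallyGraphic H π →
      (potentialNumber H n : ℝ) - δ * n ≤ (π.sum : ℝ) →
      ∃ π' ∈ potSet H n, (seqDist π π' : ℝ) < ε * n

/-- The join `G ∨ H` of two graphs on disjoint vertex sets. -/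
def graphJoin {V : Type*} {W : Type*} (G : SimpleGraph V) (H : SimpleGraph W) :
    SimpleGraph (V ⊕ W) where
  Adj x y :=
    match x, y with
    | .inl a, .inl b => G.Adj a b
    | .inr a, .inr b => H.Adj a b
    | .inl _, .inr _ => True
    | .inr _, .inl _ => True
  symm := by
    constructor
    rintro (a | a) (b | b) h
    · exact G.adj_symm h
    · trivial
    · trivial
    · exact H.adj_symm h
  loopless := by
    constructor
    rintro (a | a) h
    · exact G.loopless.irrefl a h
    · exact H.loopless.irrefl a h

/-- The double star `S_{x,y}`: two adjacent centers (vertices `0` and `1`), with the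
first center adjacent to `x` leaves and the second to `y` leaves, so that the centers
have degrees `x+1` and `y+1`. -/
def doubleStar (x y : ℕ) : SimpleGraph (Fin (x + y + 2)) :=
  SimpleGraph.fromRel fun a b =>
    (a.val = 0 ∧ b.val = 1) ∨
    (a.val = 0 ∧ 2 ≤ b.val ∧ b.val < x + 2) ∨
    (a.val = 1 ∧ x + 2 ≤ b.val)

/-- Laying off the term at (0-based) position `i`: delete it and subtract one from
the `d_i` largest remaining terms. -/
def layOffAt (π : List ℕ) (i : ℕ) : List ℕ :=
  let d := π.getD i 0
  let rest := π.take i ++ π.drop (i + 1)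
  (rest.take d).map (· - 1) ++ rest.drop d


section Helpers

lemma ncard_setOf_val (n : ℕ) (P : ℕ → Prop) [DecidablePred P] :
    {w : Fin n | P w.val}.ncard = ((Finset.range n).filter P).card := by
  classical
  rw [Set.ncard_eq_toFinset_card', Set.toFinset_setOf, Finset.card_filter, Finset.card_filter]
  exact Fin.sum_univ_eq_sum_range (fun j => if P j then 1 else 0) n

lemma list_sum_getD_self (l : List ℕ) :
    l.sum = ∑ j ∈ Finset.range l.length, l.getD j 0 := by
  induction l with
  | nil => simp
  | cons a t ih =>
    rw [List.sum_cons, List.length_cons, Finset.sum_range_succ']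
    simp only [List.getD_cons_succ, List.getD_cons_zero]
    rw [← ih]; omega

lemma list_sum_getD (l : List ℕ) {m : ℕ} (h : l.length ≤ m) :
    l.sum = ∑ j ∈ Finset.range m, l.getD j 0 := by
  rw [list_sum_getD_self]
  apply Finset.sum_subset (Finset.range_subset_range.2 h)
  intro j _ hj
  exact List.getD_eq_default _ _ (by simpa using hj)

lemma list_range_map_sum (M : ℕ) (f : ℕ → ℕ) :
    ((List.range M).map f).sum = ∑ j ∈ Finset.range M, f j := by
  induction M with
  | zero => simp
  | succ m ih => rw [List.range_succ, List.map_append, List.sum_append, Finset.sum_range_succ, ih]; simp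

lemma nat_le_add_dist (x y : ℕ) : x ≤ y + Nat.dist x y := by
  simp only [Nat.dist]; omega

lemma seqDist_eq (p q : List ℕ) :
    seqDist p q = ∑ j ∈ Finset.range (max p.length q.length), Nat.dist (p.getD j 0) (q.getD j 0) := by
  rw [seqDist, list_range_map_sum]

lemma sum_le_sum_add_seqDist (p q : List ℕ) : p.sum ≤ q.sum + seqDist p q := by
  rw [seqDist_eq, list_sum_getD p (le_max_left p.length q.length),
    list_sum_getD q (le_max_right p.length q.length), ← Finset.sum_add_distrib]
  exact Finset.sum_le_sum fun j _ => nat_le_add_dist _ _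

lemma dist_getD_le_seqDist (p q : List ℕ) {j : ℕ} (hj : j < p.length) :
    Nat.dist (p.getD j 0) (q.getD j 0) ≤ seqDist p q := by
  rw [seqDist_eq]
  exact Finset.single_le_sum (f := fun j => Nat.dist (p.getD j 0) (q.getD j 0))
    (fun i _ => Nat.zero_le _) (Finset.mem_range.2 (lt_of_lt_of_le hj (le_max_left _ _)))

lemma gdeg_le_card {V : Type*} [Fintype V] (G : SimpleGraph V) (v : V) :
    gdeg G v ≤ Fintype.card V := by
  rw [gdeg]
  calc {w | G.Adj v w}.ncard ≤ (Set.univ : Set V).ncard :=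
        Set.ncard_le_ncard (Set.subset_univ _) Set.finite_univ
    _ = Fintype.card V := by rw [Set.ncard_univ, Nat.card_eq_fintype_card]

lemma graphic_sum_le {π : List ℕ} (h : IsGraphic π) : π.sum ≤ π.length * π.length := by
  obtain ⟨G, hG⟩ := h
  have h1 : π.sum = (degMultiset G).sum := by rw [hG, Multiset.sum_coe]
  have h2 : (degMultiset G).sum ≤ Multiset.card (degMultiset G) * π.length := by
    refine le_trans (Multiset.sum_le_card_nsmul _ π.length ?_) (by rw [smul_eq_mul])
    intro x hx
    obtain ⟨v, _, rfl⟩ := Multiset.mem_map.1 hx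
    have := gdeg_le_card G v
    simp only [Fintype.card_fin] at this ⊢
    exact this
  have h3 : Multiset.card (degMultiset G) = π.length := by
    rw [degMultiset, Multiset.card_map]
    simpa using Fintype.card_fin π.length
  rw [h3] at h2
  omega

lemma isGraphic_replicate_zero (n : ℕ) : IsGraphic (List.replicate n 0) := by
  refine ⟨⊥, ?_⟩
  have hdeg : ∀ v, gdeg (⊥ : SimpleGraph (Fin (List.replicate n 0).length)) v = 0 := by
    intro v; simp [gdeg]
  rw [degMultiset]
  calc Finset.univ.val.map (gdeg (⊥ : SimpleGraph (Fin (List.replicate n 0).length)))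
      = Finset.univ.val.map (Function.const _ 0) := Multiset.map_congr rfl (fun x _ => hdeg x)
    _ = Multiset.replicate n 0 := by
        rw [Multiset.map_const]
        congr 1
        simpa using Fintype.card_fin (List.replicate n 0).length
    _ = ((List.replicate n 0 : List ℕ) : Multiset ℕ) := (Multiset.coe_replicate n 0).symm

lemma ncard_ne_val {n : ℕ} (x : Fin n) : {w : Fin n | w ≠ x}.ncard = n - 1 := by
  classical
  have h1 : {w : Fin n | w ≠ x} = {w : Fin n | w.val ≠ x.val} := by
    ext w; simp [Fin.ext_iff]
  rw [h1, ncard_setOf_val n (fun j => j ≠ x.val)]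
  have h2 : (Finset.range n).filter (fun j => j ≠ x.val) = Finset.range n \ {x.val} := by
    ext j; simp [Finset.mem_filter, Finset.mem_sdiff]
  rw [h2, Finset.card_sdiff_of_subset (by simp [Finset.singleton_subset_iff, x.isLt])]
  simp

lemma countP_degMultiset {V : Type*} [Fintype V] (G : SimpleGraph V) (p : ℕ → Prop)
    [DecidablePred p] :
    Multiset.countP p (degMultiset G) = (Finset.univ.filter (fun v => p (gdeg G v))).card := by
  rw [degMultiset, Multiset.countP_map]
  rfl

lemma not_pot_of_countP {k : ℕ} (hk : 1 ≤ k) (π : List ℕ)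
    (h : π.countP (fun x => decide (k - 1 ≤ x)) < k) :
    ¬ PotentiallyGraphic (⊤ : SimpleGraph (Fin k)) π := by
  classical
  rintro ⟨G, hdeg, f, hinj, hadj⟩
  have hdegree : ∀ x : Fin k, k - 1 ≤ gdeg G (f x) := by
    intro x
    have hsub : f '' {y | y ≠ x} ⊆ {w | G.Adj (f x) w} := by
      rintro w ⟨y, hy, rfl⟩
      exact hadj ((SimpleGraph.top_adj x y).2 (Ne.symm hy))
    calc k - 1 = ({y : Fin k | y ≠ x}).ncard := (ncard_ne_val x).symm
      _ = (f '' {y | y ≠ x}).ncard := (Set.ncard_image_of_injective _ hinj).symm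
      _ ≤ ({w | G.Adj (f x) w}).ncard := Set.ncard_le_ncard hsub (Set.toFinite _)
      _ = gdeg G (f x) := rfl
  have hsub2 : Finset.univ.image f ⊆ Finset.univ.filter (fun v => k - 1 ≤ gdeg G v) := by
    intro v hv
    obtain ⟨x, _, rfl⟩ := Finset.mem_image.1 hv
    exact Finset.mem_filter.2 ⟨Finset.mem_univ _, hdegree x⟩
  have hcard : k ≤ (Finset.univ.filter (fun v => k - 1 ≤ gdeg G v)).card := by
    calc k = (Finset.univ.image f).card := by
          rw [Finset.card_image_of_injective _ hinj]; simp
      _ ≤ _ := Finset.card_le_card hsub2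
  have hcnt : Multiset.countP (fun x => k - 1 ≤ x) (degMultiset G)
      = π.countP (fun x => decide (k - 1 ≤ x)) := by
    rw [hdeg, Multiset.coe_countP]
  rw [countP_degMultiset] at hcnt
  omega

lemma one_le_indepNum {k : ℕ} (hk : 1 ≤ k) :
    1 ≤ _root_.indepNum (⊤ : SimpleGraph (Fin k)) := by
  apply le_csSup
  · refine ⟨k, fun m hm => ?_⟩
    obtain ⟨s, hs, _⟩ := hm
    rw [← hs]
    simpa using Finset.card_le_univ s
  · refine ⟨{⟨0, hk⟩}, Finset.card_singleton _, ?_⟩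
    simp only [Finset.coe_singleton]
    exact Set.pairwise_singleton _ _

lemma nabla_top_le {k i : ℕ} (h1 : 1 ≤ i) (hik : i ≤ k) :
    nabla (⊤ : SimpleGraph (Fin k)) i ≤ i - 1 := by
  classical
  obtain ⟨s, -, hcard⟩ := Finset.exists_subset_card_eq
    (show i ≤ (Finset.univ : Finset (Fin k)).card by simpa using hik)
  have hmax : maxDeg (SimpleGraph.induce (s : Set (Fin k)) (⊤ : SimpleGraph (Fin k))) ≤ i - 1 := by
    apply Finset.sup_le
    intro v _
    have hset : {w | (SimpleGraph.induce (s : Set (Fin k)) ⊤).Adj v w}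
        = Set.univ \ {v} := by
      ext w
      simp only [SimpleGraph.comap_adj, SimpleGraph.top_adj, Set.mem_setOf_eq,
        Set.mem_diff, Set.mem_univ, Set.mem_singleton_iff, true_and]
      constructor
      · intro hne h; exact hne (by rw [h])
      · intro hne h; exact hne (Subtype.ext h).symm
    rw [gdeg, hset, Set.ncard_diff_singleton_of_mem (Set.mem_univ v), Set.ncard_univ]
    have : Nat.card ↑(s : Set (Fin k)) = i := by
      rw [Nat.card_coe_set_eq, Set.ncard_coe_finset, hcard]
    omega
  exact le_trans (Nat.sInf_le ⟨s, hcard, rfl⟩) hmax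

lemma getD_replicate_le (m x j : ℕ) : (List.replicate m x).getD j 0 ≤ x := by
  by_cases h : j < (List.replicate m x).length
  · rw [List.getD_eq_getElem _ _ h, List.getElem_replicate]
  · rw [List.getD_eq_default _ _ (by omega)]; exact Nat.zero_le _

lemma tilde_d_le {k i : ℕ} (h2 : 2 ≤ i) (hik : i ≤ k) :
    k - i + nabla (⊤ : SimpleGraph (Fin k)) i - 1 ≤ k - 2 := by
  have := nabla_top_le (show 1 ≤ i by omega) hik
  omega

lemma tilde_getD_le {k n i : ℕ} (h2 : 2 ≤ i) (hik : i ≤ k) :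
    (tildePi (⊤ : SimpleGraph (Fin k)) i n).getD (k - 2) 0 ≤ k - 2 := by
  have hd := tilde_d_le h2 hik
  rw [tildePi]
  simp only [Fintype.card_fin]
  set d := k - i + nabla (⊤ : SimpleGraph (Fin k)) i - 1 with hdd
  set base := List.replicate (k - i) (n - 1) ++ List.replicate (n - k + i) d with hbase
  have hlen1 : (List.replicate (k - i) (n - 1)).length ≤ k - 2 := by simp; omega
  have hbase_getD : base.getD (k - 2) 0 ≤ k - 2 := by
    rw [hbase, List.getD_append_right _ _ _ _ hlen1]
    exact le_trans (getD_replicate_le _ _ _) hd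
  by_cases hpar : Even base.sum
  · simpa [hpar] using hbase_getD
  · simp only [hpar, if_false]
    by_cases hj : k - 2 < base.dropLast.length
    · rw [List.getD_append _ _ _ _ hj, List.getD_eq_getElem _ _ hj,
        List.IsPrefix.getElem (List.dropLast_prefix base) hj]
      rw [← List.getD_eq_getElem base 0 (by
        have : base.dropLast.length = base.length - 1 := List.length_dropLast; omega)]
      exact hbase_getD
    · rw [List.getD_append_right _ _ _ _ (by omega)]
      have : ∀ t, (List.getD [d - 1] t 0) ≤ d - 1 := by
        intro t
        match t with
        | 0 => simp
        | (t+1) => simp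
      exact le_trans (this _) (by omega)

lemma tilde_sum_le {k n i : ℕ} (h2 : 2 ≤ i) (hik : i ≤ k) (hkn : k ≤ n) :
    (tildePi (⊤ : SimpleGraph (Fin k)) i n).sum ≤ (k - 2) * (n - 1) + n * (k - 2) + k := by
  have hd := tilde_d_le h2 hik
  rw [tildePi]
  simp only [Fintype.card_fin]
  set d := k - i + nabla (⊤ : SimpleGraph (Fin k)) i - 1 with hdd
  set base := List.replicate (k - i) (n - 1) ++ List.replicate (n - k + i) d with hbase
  have hbs : base.sum ≤ (k - 2) * (n - 1) + n * (k - 2) := by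
    rw [hbase, List.sum_append, List.sum_replicate, List.sum_replicate, smul_eq_mul, smul_eq_mul]
    have e1 : (k - i) * (n - 1) ≤ (k - 2) * (n - 1) :=
      Nat.mul_le_mul_right _ (by omega)
    have e2 : (n - k + i) * d ≤ n * (k - 2) :=
      Nat.mul_le_mul (show n - k + i ≤ n by omega) hd
    exact Nat.add_le_add e1 e2
  by_cases hpar : Even base.sum
  · simp only [hpar, if_true]; omega
  · simp only [hpar, if_false]
    rw [List.sum_append, List.sum_cons, List.sum_nil]
    have hsl : base.dropLast.sum ≤ base.sum :=
      List.Sublist.sum_le_sum (List.dropLast_sublist base) (fun a _ => Nat.zero_le _)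
    omega

/-- Degree profile of the counterexample sequence. -/
def cexg (K M : ℕ) (j : ℕ) : ℕ :=
  if j < K then 2*M+K+3 else if j < K+2 then K+M+2 else K+1

/-- The counterexample sequence `((n-1)^{k-3}, a, a, (k-2)^{n-k+1})` with `a ≈ n/2`. -/
def cex (K M : ℕ) : List ℕ :=
  List.replicate K (2*M+K+3) ++ (K+M+2) :: (K+M+2) :: List.replicate (2*M+2) (K+1)

/-- The relation generating a realization of `cex`. -/
def cexRel (K M : ℕ) (i j : Fin (2*M+K+4)) : Prop :=
  i.val < K ∨ (i.val = K ∧ (j.val = K+1 ∨ (K+2 ≤ j.val ∧ j.val < K+M+3)))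
    ∨ (i.val = K+1 ∧ K+M+3 ≤ j.val)

instance (K M : ℕ) (i j : Fin (2*M+K+4)) : Decidable (cexRel K M i j) := by
  unfold cexRel; infer_instance

/-- A realization of `cex`. -/
def cexGraph (K M : ℕ) : SimpleGraph (Fin (2*M+K+4)) := SimpleGraph.fromRel (cexRel K M)

lemma gdeg_cexGraph (K M : ℕ) (x : Fin (2*M+K+4)) :
    gdeg (cexGraph K M) x = cexg K M x.val := by
  classical
  have hx := x.isLt
  rcases lt_or_ge x.val K with h | h
  · have hset : {w | (cexGraph K M).Adj x w} = {w : Fin (2*M+K+4) | w ≠ x} := by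
      ext w
      simp only [cexGraph, cexRel, SimpleGraph.fromRel_adj, Set.mem_setOf_eq, ne_eq,
        Fin.ext_iff]
      omega
    rw [gdeg, hset, ncard_ne_val]
    unfold cexg; split_ifs <;> omega
  rcases Nat.lt_or_ge x.val (K+1) with h' | h'
  · -- x = u, x.val = K
    have hxK : x.val = K := by omega
    have hset : {w | (cexGraph K M).Adj x w}
        = {w : Fin (2*M+K+4) | w.val < K ∨ w.val = K+1 ∨ (K+2 ≤ w.val ∧ w.val < K+M+3)} := by
      ext w
      simp only [cexGraph, cexRel, SimpleGraph.fromRel_adj, Set.mem_setOf_eq, ne_eq,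
        Fin.ext_iff]
      omega
    rw [gdeg, hset, ncard_setOf_val _ (fun j => j < K ∨ j = K+1 ∨ (K+2 ≤ j ∧ j < K+M+3))]
    have hfil : (Finset.range (2*M+K+4)).filter
        (fun j => j < K ∨ j = K+1 ∨ (K+2 ≤ j ∧ j < K+M+3))
        = Finset.range (K+M+3) \ {K} := by
      ext j
      simp only [Finset.mem_filter, Finset.mem_range, Finset.mem_sdiff, Finset.mem_singleton]
      omega
    rw [hfil, Finset.card_sdiff_of_subset (by simp [Finset.singleton_subset_iff]; omega)]
    simp only [Finset.card_range, Finset.card_singleton]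
    unfold cexg; split_ifs <;> omega
  rcases Nat.lt_or_ge x.val (K+2) with h'' | h''
  · -- x = v, x.val = K+1
    have hxK : x.val = K+1 := by omega
    have hset : {w | (cexGraph K M).Adj x w}
        = {w : Fin (2*M+K+4) | w.val ≤ K ∨ K+M+3 ≤ w.val} := by
      ext w
      simp only [cexGraph, cexRel, SimpleGraph.fromRel_adj, Set.mem_setOf_eq, ne_eq,
        Fin.ext_iff]
      omega
    rw [gdeg, hset, ncard_setOf_val _ (fun j => j ≤ K ∨ K+M+3 ≤ j)]
    have hfil : (Finset.range (2*M+K+4)).filter (fun j => j ≤ K ∨ K+M+3 ≤ j)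
        = Finset.range (2*M+K+4) \ Finset.Ico (K+1) (K+M+3) := by
      ext j
      simp only [Finset.mem_filter, Finset.mem_range, Finset.mem_sdiff, Finset.mem_Ico]
      omega
    have hsub : Finset.Ico (K+1) (K+M+3) ⊆ Finset.range (2*M+K+4) := by
      intro j hj
      simp only [Finset.mem_Ico] at hj
      simp only [Finset.mem_range]
      omega
    rw [hfil, Finset.card_sdiff_of_subset hsub]
    simp only [Finset.card_range, Nat.card_Ico]
    unfold cexg; split_ifs <;> omega
  rcases Nat.lt_or_ge x.val (K+M+3) with h3 | h3
  · -- small attached to u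
    have hset : {w | (cexGraph K M).Adj x w} = {w : Fin (2*M+K+4) | w.val ≤ K} := by
      ext w
      simp only [cexGraph, cexRel, SimpleGraph.fromRel_adj, Set.mem_setOf_eq, ne_eq,
        Fin.ext_iff]
      omega
    rw [gdeg, hset, ncard_setOf_val _ (fun j => j ≤ K)]
    have hfil : (Finset.range (2*M+K+4)).filter (fun j => j ≤ K) = Finset.range (K+1) := by
      ext j
      simp only [Finset.mem_filter, Finset.mem_range]
      omega
    rw [hfil]
    simp only [Finset.card_range]
    unfold cexg; split_ifs <;> omega
  · -- small attached to v
    have hset : {w | (cexGraph K M).Adj x w}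
        = {w : Fin (2*M+K+4) | w.val < K ∨ w.val = K+1} := by
      ext w
      simp only [cexGraph, cexRel, SimpleGraph.fromRel_adj, Set.mem_setOf_eq, ne_eq,
        Fin.ext_iff]
      omega
    rw [gdeg, hset, ncard_setOf_val _ (fun j => j < K ∨ j = K+1)]
    have hfil : (Finset.range (2*M+K+4)).filter (fun j => j < K ∨ j = K+1)
        = Finset.range (K+2) \ {K} := by
      ext j
      simp only [Finset.mem_filter, Finset.mem_range, Finset.mem_sdiff, Finset.mem_singleton]
      omega
    rw [hfil, Finset.card_sdiff_of_subset (by simp [Finset.singleton_subset_iff])]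
    simp only [Finset.card_range, Finset.card_singleton]
    unfold cexg; split_ifs <;> omega

lemma cex_map (K M : ℕ) : (List.range (2*M+K+4)).map (cexg K M) = cex K M := by
  have h : 2*M+K+4 = K + (2 + (2*M+2)) := by ring
  rw [h, List.range_add, List.map_append, List.range_add, List.map_map,
    List.map_append, List.map_map]
  have p1 : (List.range K).map (cexg K M) = List.replicate K (2*M+K+3) := by
    refine List.eq_replicate_iff.2 ⟨by simp, ?_⟩
    intro b hb
    obtain ⟨j, hj, rfl⟩ := List.mem_map.1 hb
    rw [List.mem_range] at hj
    unfold cexg; split_ifs <;> omega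
  have p2 : (List.range 2).map (cexg K M ∘ fun x => K + x) = [K+M+2, K+M+2] := by
    have : List.range 2 = [0, 1] := by decide
    rw [this]
    simp only [List.map_cons, List.map_nil, Function.comp_apply]
    congr 1
    · unfold cexg; split_ifs <;> omega
    congr 1
    · unfold cexg; split_ifs <;> omega
  have p3 : (List.range (2*M+2)).map ((cexg K M ∘ fun x => K + x) ∘ fun x => 2 + x)
      = List.replicate (2*M+2) (K+1) := by
    refine List.eq_replicate_iff.2 ⟨by simp, ?_⟩
    intro b hb
    obtain ⟨j, hj, rfl⟩ := List.mem_map.1 hb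
    rw [List.mem_range] at hj
    simp only [Function.comp_apply]
    unfold cexg; split_ifs <;> omega
  rw [p1, p2, p3, cex]
  rfl

lemma degMultiset_cexGraph (K M : ℕ) :
    degMultiset (cexGraph K M) = ((cex K M : List ℕ) : Multiset ℕ) := by
  rw [degMultiset]
  have h1 : Finset.univ.val.map (gdeg (cexGraph K M))
      = Finset.univ.val.map (fun x : Fin (2*M+K+4) => cexg K M x.val) :=
    Multiset.map_congr rfl (fun x _ => gdeg_cexGraph K M x)
  rw [h1]
  have h2 : Finset.univ.val.map (fun x : Fin (2*M+K+4) => cexg K M x.val)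
      = (Finset.univ.val.map (fun x : Fin (2*M+K+4) => x.val)).map (cexg K M) := by
    rw [Multiset.map_map]; rfl
  rw [h2]
  have h3 : Finset.univ.val.map (fun x : Fin (2*M+K+4) => x.val)
      = ((List.range (2*M+K+4) : List ℕ) : Multiset ℕ) := by
    have h5 : Finset.map Fin.valEmbedding (Finset.univ : Finset (Fin (2*M+K+4)))
        = Finset.Iio (2*M+K+4) := Fin.map_valEmbedding_univ
    have h4 : (Finset.map Fin.valEmbedding (Finset.univ : Finset (Fin (2*M+K+4)))).val
        = (Finset.Iio (2*M+K+4)).val := by rw [h5]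
    rw [Finset.map_val, Nat.Iio_eq_range] at h4
    have h6 : (Finset.range (2*M+K+4)).val = ((List.range (2*M+K+4) : List ℕ) : Multiset ℕ) := rfl
    rw [← h6]
    rw [← h4]
    rfl
  rw [h3, Multiset.map_coe, cex_map]

lemma cex_length (K M : ℕ) : (cex K M).length = 2*M+K+4 := by
  simp [cex]; omega

lemma isGraphic_cex (K M : ℕ) : IsGraphic (cex K M) := by
  show ∃ G : SimpleGraph (Fin (cex K M).length), degMultiset G = ↑(cex K M)
  rw [cex_length]
  exact ⟨cexGraph K M, degMultiset_cexGraph K M⟩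

lemma cex_sorted (K M : ℕ) : (cex K M).Sorted (· ≥ ·) := by
  unfold cex
  rw [List.Sorted, List.pairwise_append]
  refine ⟨List.pairwise_replicate.2 (Or.inr le_rfl), ?_, ?_⟩
  · rw [List.pairwise_cons]
    refine ⟨?_, ?_⟩
    · intro b hb
      rcases List.mem_cons.1 hb with rfl | hb'
      · omega
      · have := List.eq_of_mem_replicate hb'; omega
    rw [List.pairwise_cons]
    refine ⟨?_, List.pairwise_replicate.2 (Or.inr le_rfl)⟩
    intro b hb
    have := List.eq_of_mem_replicate hb; omega
  · intro a ha b hb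
    have ha' := List.eq_of_mem_replicate ha
    rcases List.mem_cons.1 hb with rfl | hb'
    · omega
    rcases List.mem_cons.1 hb' with rfl | hb''
    · omega
    · have := List.eq_of_mem_replicate hb''; omega

lemma cex_sum (K M : ℕ) : (cex K M).sum + (K+1)*(K+2) = (2*K+2)*(2*M+K+4) := by
  simp only [cex, List.sum_append, List.sum_cons, List.sum_replicate, smul_eq_mul]
  ring

lemma cex_countP (K M : ℕ) : (cex K M).countP (fun x => decide (K+2 ≤ x)) = K + 2 := by
  unfold cex
  simp only [List.countP_append, List.countP_cons, List.countP_replicate,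
    decide_eq_true_eq]
  split_ifs <;> omega

lemma cex_getD (K M : ℕ) : (cex K M).getD (K+1) 0 = K+M+2 := by
  unfold cex
  rw [List.getD_append_right _ _ _ _ (by simp)]
  simp

lemma sorted_replicate_ge (n x : ℕ) : (List.replicate n x).Sorted (· ≥ ·) :=
  List.pairwise_replicate.2 (Or.inr le_rfl)

lemma exists_bad {k : ℕ} (hk : 3 ≤ k) (n : ℕ) :
    ∃ π : List ℕ, π.length = n ∧ π.Sorted (· ≥ ·) ∧ IsGraphic π ∧
      potentialNumber (⊤ : SimpleGraph (Fin k)) n ≤ π.sum + 2 ∧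
      ¬ PotentiallyGraphic (⊤ : SimpleGraph (Fin k)) π := by
  classical
  set S := {s : ℕ | Even s ∧ ∀ π : List ℕ, π.length = n → π.Sorted (· ≥ ·) →
      IsGraphic π → s ≤ π.sum → PotentiallyGraphic (⊤ : SimpleGraph (Fin k)) π} with hS
  have hPN : potentialNumber (⊤ : SimpleGraph (Fin k)) n = sInf S := rfl
  have hmemtop : 2*(n*n)+2 ∈ S := by
    refine ⟨⟨n*n+1, by ring⟩, fun π h1 h2 h3 h4 => ?_⟩
    exfalso
    have hb := graphic_sum_le h3
    rw [h1] at hb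
    omega
  have hne : S.Nonempty := ⟨_, hmemtop⟩
  have hmem := Nat.sInf_mem hne
  have h0 : 0 ∉ S := by
    rintro ⟨-, hall⟩
    have hpot := hall (List.replicate n 0) (by simp) (sorted_replicate_ge n 0)
      (isGraphic_replicate_zero n) (Nat.zero_le _)
    obtain ⟨G, hdeg, f, hinj, hadj⟩ := hpot
    have h01 : (⊤ : SimpleGraph (Fin k)).Adj ⟨0, by omega⟩ ⟨1, by omega⟩ := by
      simp [Fin.ext_iff]
    have hAdj := hadj h01
    have hzero : gdeg G (f ⟨0, by omega⟩) = 0 := by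
      have hmm : gdeg G (f ⟨0, by omega⟩) ∈ degMultiset G :=
        Multiset.mem_map_of_mem _ (by simp)
      rw [hdeg, Multiset.coe_replicate] at hmm
      exact Multiset.eq_of_mem_replicate hmm
    have hemp : {w | G.Adj (f ⟨0, by omega⟩) w} = ∅ :=
      (Set.ncard_eq_zero (Set.toFinite _)).1 hzero
    have : f ⟨1, by omega⟩ ∈ {w | G.Adj (f ⟨0, by omega⟩) w} := hAdj
    rw [hemp] at this
    exact this
  have hpos : 2 ≤ sInf S := by
    have h1 : sInf S ≠ 0 := fun h => h0 (h ▸ hmem)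
    obtain ⟨t, ht⟩ := hmem.1
    omega
  have hnotmem : sInf S - 2 ∉ S := Nat.notMem_of_lt_sInf (by omega)
  have heven2 : Even (sInf S - 2) := by
    obtain ⟨t, ht⟩ := hmem.1
    exact ⟨t - 1, by omega⟩
  rw [hS, Set.mem_setOf_eq] at hnotmem
  push_neg at hnotmem
  obtain ⟨π₂, h1, h2, h3, h4, h5⟩ := hnotmem heven2
  exact ⟨π₂, h1, h2, h3, by rw [hPN, hS]; omega, h5⟩

end Helpers

/-- **Theorem.** For every `k ≥ 3`, the complete graph `K_k` is not σ-stable. -/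
theorem cliqueNotStable (k : ℕ) (hk : 3 ≤ k) :
    ¬ SigmaStable (⊤ : SimpleGraph (Fin k)) := by
  intro hstab
  obtain ⟨K, rfl⟩ : ∃ K, k = K + 3 := ⟨k - 3, by omega⟩
  -- two instantiations of stability
  obtain ⟨δ₂, hδ₂, n₀₂, h₂⟩ := hstab (1/4 : ℝ) (by norm_num)
  obtain ⟨δ₁, hδ₁, n₀₁, h₁⟩ := hstab (δ₂/2) (by positivity)
  -- choose a large parameter M
  obtain ⟨M₀, hM₀⟩ := exists_nat_gt
    (2/δ₁ + (2*((K:ℝ)+5+(K+1)*(K+2)))/δ₂)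
  set M := M₀ + n₀₁ + n₀₂ + K + 4 with hM
  set n := 2*M + K + 4 with hn
  have hMM₀ : (M₀ : ℝ) ≤ (n : ℝ) := by
    have : M₀ ≤ n := by omega
    exact_mod_cast this
  have hb₁ : 2 < δ₁ * n := by
    have e1 : 2/δ₁ < (n : ℝ) := by
      have h5 : (0:ℝ) ≤ (2*((K:ℝ)+5+(K+1)*(K+2)))/δ₂ := by positivity
      nlinarith
    calc (2:ℝ) = δ₁ * (2/δ₁) := by field_simp
      _ < δ₁ * n := by apply mul_lt_mul_of_pos_left e1 hδ₁
  have hb₂ : 2*((K:ℝ)+5+(K+1)*(K+2)) < δ₂ * n := by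
    have e1 : (2*((K:ℝ)+5+(K+1)*(K+2)))/δ₂ < (n : ℝ) := by
      have h5 : (0:ℝ) ≤ 2/δ₁ := by positivity
      nlinarith
    calc 2*((K:ℝ)+5+(K+1)*(K+2)) = δ₂ * ((2*((K:ℝ)+5+(K+1)*(K+2)))/δ₂) := by field_simp
      _ < δ₂ * n := by apply mul_lt_mul_of_pos_left e1 hδ₂
  -- Step 1: bound the potential number using an extremal non-potential sequence
  obtain ⟨π₂, hl2, hs2, hg2, hsum2, hnp2⟩ := exists_bad (show 3 ≤ K+3 by omega) n
  have hprem2 : (potentialNumber (⊤ : SimpleGraph (Fin (K+3))) n : ℝ) - δ₁ * n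
      ≤ (π₂.sum : ℝ) := by
    have hc : (potentialNumber (⊤ : SimpleGraph (Fin (K+3))) n : ℝ) ≤ (π₂.sum : ℝ) + 2 := by
      exact_mod_cast hsum2
    linarith
  obtain ⟨π'₂, hmem'2, hdist2⟩ := h₁ n (by omega) π₂ hl2 hs2 hg2 hnp2 hprem2
  obtain ⟨i, hi, -, rfl⟩ := hmem'2
  rw [Finset.mem_Icc] at hi
  simp only [Fintype.card_fin] at hi
  have h2i : 2 ≤ i := by
    have := one_le_indepNum (k := K+3) (by omega)
    omega
  have hik : i ≤ K + 3 := hi.2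
  have hsum' : (tildePi (⊤ : SimpleGraph (Fin (K+3))) i n).sum
      ≤ (K+1)*n + n*(K+1) + (K+3) := by
    have hle := tilde_sum_le (k := K+3) (n := n) h2i hik (by omega)
    have e1 : K+3-2 = K+1 := by omega
    rw [e1] at hle
    have e2 : (K+1)*(n-1) ≤ (K+1)*n := Nat.mul_le_mul_left _ (by omega)
    omega
  -- upper bound on the potential number
  have hNat : potentialNumber (⊤ : SimpleGraph (Fin (K+3))) n
      ≤ (K+1)*n + n*(K+1) + (K+3) + 2
        + seqDist π₂ (tildePi (⊤ : SimpleGraph (Fin (K+3))) i n) := by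
    have c1 := sum_le_sum_add_seqDist π₂ (tildePi (⊤ : SimpleGraph (Fin (K+3))) i n)
    omega
  have hkey : (potentialNumber (⊤ : SimpleGraph (Fin (K+3))) n : ℝ)
      ≤ ((K:ℝ)+1)*n + n*((K:ℝ)+1) + (K+3) + 2 + δ₂/2 * n := by
    have c2 : (potentialNumber (⊤ : SimpleGraph (Fin (K+3))) n : ℝ)
        ≤ ((K:ℝ)+1)*n + n*((K:ℝ)+1) + (K+3) + 2
          + (seqDist π₂ (tildePi (⊤ : SimpleGraph (Fin (K+3))) i n) : ℝ) := by
      exact_mod_cast hNat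
    linarith
  -- Step 2: feed the counterexample sequence to stability
  have hlcex : (cex K M).length = n := cex_length K M
  have hnpcex : ¬ PotentiallyGraphic (⊤ : SimpleGraph (Fin (K+3))) (cex K M) := by
    apply not_pot_of_countP (show 1 ≤ K+3 by omega)
    have e : K+3-1 = K+2 := by omega
    rw [e, cex_countP]
    omega
  have hsumcex : (cex K M).sum + (K+1)*(K+2) = (2*K+2)*n := cex_sum K M
  have hpremcex : (potentialNumber (⊤ : SimpleGraph (Fin (K+3))) n : ℝ) - δ₂ * n
      ≤ ((cex K M).sum : ℝ) := by
    have hcs : ((cex K M).sum : ℝ) + ((K:ℝ)+1)*((K:ℝ)+2) = (2*(K:ℝ)+2)*n := by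
      exact_mod_cast hsumcex
    nlinarith [hkey, hb₂]
  obtain ⟨π', hmem', hdist'⟩ := h₂ n (by omega) (cex K M) hlcex (cex_sorted K M)
    (isGraphic_cex K M) hnpcex hpremcex
  obtain ⟨i', hi', -, rfl⟩ := hmem'
  rw [Finset.mem_Icc] at hi'
  simp only [Fintype.card_fin] at hi'
  have h2i' : 2 ≤ i' := by
    have := one_le_indepNum (k := K+3) (by omega)
    omega
  have hik' : i' ≤ K + 3 := hi'.2
  have hgd : (tildePi (⊤ : SimpleGraph (Fin (K+3))) i' n).getD (K+1) 0 ≤ K+1 := by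
    have hle := tilde_getD_le (k := K+3) (n := n) h2i' hik'
    have e : K+3-2 = K+1 := by omega
    rw [e] at hle
    exact hle
  have hdistlow : M + 1 ≤ seqDist (cex K M) (tildePi (⊤ : SimpleGraph (Fin (K+3))) i' n) := by
    have hj : K + 1 < (cex K M).length := by rw [hlcex]; omega
    have hd1 := dist_getD_le_seqDist (cex K M) (tildePi (⊤ : SimpleGraph (Fin (K+3))) i' n) hj
    rw [cex_getD] at hd1
    have hd2 : M + 1 ≤ Nat.dist (K+M+2)
        ((tildePi (⊤ : SimpleGraph (Fin (K+3))) i' n).getD (K+1) 0) := by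
      simp only [Nat.dist]
      omega
    omega
  -- contradiction
  have hc1 : (M + 1 : ℝ) ≤ (seqDist (cex K M) (tildePi (⊤ : SimpleGraph (Fin (K+3))) i' n) : ℝ) := by
    exact_mod_cast hdistlow
  have hc2 : (n : ℝ) = 2*(M : ℝ) + K + 4 := by
    rw [hn]; push_cast; ring
  have hc3 : (K : ℝ) + 4 ≤ (M : ℝ) := by
    have : K + 4 ≤ M := by omega
    exact_mod_cast this
  linarith
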